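/- Let G be a unimodular compactly generated locally compact group with compact symmetric generating neighbourhood K and Haar measure λ, and suppose G satisfies the Følner condition: for every ε > 0 and every m, there is a compact L ⊆ G with λ(L) > 0 and λ(LKᵐ ∖ L)/λ(L) < ε. Then any rough Cayley graph X of G is amenable as a metric space: for every c > 0 and ε > 0 there is a finite set A of vertices with |∂_c A|/|A| < ε, where ∂_c A = {x ∈ X : d(x,A) ≤ c and d(x, X∖A) ≤ c}. -/

import Mathlib

set_option maxHeartbeats 1000000

open Pointwise

/-- Quasi-isometric-embedding bounds with respect to arbitrary distance functions. -/
def QIEmb {α β : Type*} (d₁ : α → α → ℝ) (d₂ : β → β → ℝ) (C r : ℝ) (f : α → β) : Prop :=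
  ∀ x y : α, C⁻¹ * d₁ x y - r ≤ d₂ (f x) (f y) ∧ d₂ (f x) (f y) ≤ C * d₁ x y + r

/-- The graph metric of a graph, as a real-valued distance. -/
noncomputable def grDist {V : Type*} (Gr : SimpleGraph V) (u v : V) : ℝ := (Gr.dist u v : ℝ)

/-- `X` (the vertex set of `Gr`) is a rough Cayley graph of `G` via the quasi-action
`act` with constants `C₁, r₁`: `Gr` is a uniformly locally finite connected graph
and `act` is a proper cobounded `(C₁,r₁)`-quasi-action of `G` on it. -/
def IsRoughCayleyGraph {G V : Type*} [Group G] [TopologicalSpace G]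
    (Gr : SimpleGraph V) (act : G → V → V) (C₁ r₁ : ℝ) : Prop :=
  Gr.Connected ∧
  (∃ M : ℕ, ∀ v : V, (Gr.neighborSet v).Finite ∧ (Gr.neighborSet v).ncard ≤ M) ∧
  (∀ s : G, QIEmb (grDist Gr) (grDist Gr) C₁ r₁ (act s) ∧
    ∀ y : V, ∃ x : V, grDist Gr (act s x) y ≤ r₁) ∧
  (∀ x : V, grDist Gr (act 1 x) x ≤ r₁) ∧
  (∀ (s t : G) (x : V), grDist Gr (act s (act t x)) (act (s * t) x) ≤ r₁) ∧
  (∀ L : Set G, IsCompact L → ∀ x : V, ∃ R : ℝ, ∀ s ∈ L, grDist Gr (act s x) x ≤ R) ∧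
  (∀ R : ℝ, ∀ x : V, IsCompact (closure {s : G | grDist Gr (act s x) x ≤ R})) ∧
  (∀ x y : V, ∃ s : G, grDist Gr (act s x) y ≤ r₁)

/-- The `c`-boundary of a vertex set `A` in a graph. -/
noncomputable def grBoundary {V : Type*} (Gr : SimpleGraph V) (c : ℝ) (A : Set V) : Set V :=
  {x : V | (∃ a ∈ A, grDist Gr x a ≤ c) ∧ (∃ b ∈ Aᶜ, grDist Gr x b ≤ c)}

section Aux

open MeasureTheory

/-- Balls in a connected, uniformly locally finite graph are finite, with cardinality
at most `(M+1)^n`. -/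
lemma aux_ball {V : Type*} {Gr : SimpleGraph V} (hconn : Gr.Connected) {M : ℕ}
    (hM : ∀ v : V, (Gr.neighborSet v).Finite ∧ (Gr.neighborSet v).ncard ≤ M) (x : V) (n : ℕ) :
    {y : V | Gr.dist x y ≤ n}.Finite ∧ {y : V | Gr.dist x y ≤ n}.ncard ≤ (M+1)^n := by
  classical
  induction n with
  | zero =>
    have : {y : V | Gr.dist x y ≤ 0} = {x} := by
      ext y
      simp only [Set.mem_setOf_eq, Nat.le_zero, Set.mem_singleton_iff]
      rw [hconn.dist_eq_zero_iff]
      exact eq_comm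
    rw [this]; simp
  | succ n ih =>
    obtain ⟨hfin, hcard⟩ := ih
    set B := hfin.toFinset with hB
    have hNfin : ∀ z : V, (Gr.neighborSet z).Finite := fun z => (hM z).1
    set S : Finset V := B.biUnion (fun z => insert z (hNfin z).toFinset) with hS
    have hsub : {y : V | Gr.dist x y ≤ n+1} ⊆ ↑S := by
      intro y hy
      simp only [Set.mem_setOf_eq] at hy
      rcases Nat.lt_or_ge (Gr.dist x y) (n+1) with h | h
      · have hyB : y ∈ B := by
          simp [hB, Set.Finite.mem_toFinset]; omega
        simp only [hS, Finset.coe_biUnion, Set.mem_iUnion]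
        exact ⟨y, hyB, by simp⟩
      · have hdist : Gr.dist x y = n + 1 := le_antisymm hy h
        obtain ⟨p, hp⟩ := hconn.exists_walk_length_eq_dist x y
        rw [hdist] at hp
        cases hq' : p.reverse with
        | nil =>
          exfalso
          have := congrArg SimpleGraph.Walk.length hq'
          rw [SimpleGraph.Walk.length_reverse, hp] at this
          simp at this
        | @cons _ z _ hadj q =>
          have hlen : q.length = n := by
            have := congrArg SimpleGraph.Walk.length hq'
            rw [SimpleGraph.Walk.length_reverse, hp] at this
            simpa using this.symm
          have hz : Gr.dist x z ≤ n := by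
            have := SimpleGraph.dist_le q.reverse
            rwa [SimpleGraph.Walk.length_reverse, hlen] at this
          have hzB : z ∈ B := by simp [hB, Set.Finite.mem_toFinset]; exact hz
          simp only [hS, Finset.coe_biUnion, Set.mem_iUnion]
          refine ⟨z, hzB, ?_⟩
          simp only [Finset.coe_insert, Set.mem_insert_iff, Set.Finite.coe_toFinset]
          right
          exact hadj.symm
    refine ⟨Set.Finite.subset (S.finite_toSet) hsub, ?_⟩
    have h1 : {y : V | Gr.dist x y ≤ n+1}.ncard ≤ S.card := by
      have := Set.ncard_le_ncard hsub S.finite_toSet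
      rwa [Set.ncard_coe_finset] at this
    have h2 : S.card ≤ B.card * (M+1) := by
      apply le_trans (Finset.card_biUnion_le)
      apply le_trans (Finset.sum_le_card_nsmul B _ (M+1) ?_)
      · simp [mul_comm]
      · intro z _
        apply le_trans (Finset.card_insert_le _ _)
        have h5 : (Gr.neighborSet z).ncard = (hNfin z).toFinset.card :=
          Set.ncard_eq_toFinset_card _ (hNfin z)
        have h6 := (hM z).2
        omega
    have h3 : B.card ≤ (M+1)^n := by
      rw [hB, ← Set.ncard_eq_toFinset_card _ hfin]; exact hcard
    calc {y : V | Gr.dist x y ≤ n+1}.ncard ≤ B.card * (M+1) := le_trans h1 h2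
      _ ≤ (M+1)^n * (M+1) := by exact Nat.mul_le_mul_right _ h3
      _ = (M+1)^(n+1) := by ring

/-- A compact subset of a compactly generated group lies in some power of the
generating neighbourhood. -/
lemma aux_cpt_pow {G : Type*} [Group G] [TopologicalSpace G] [IsTopologicalGroup G]
    {K : Set G} (hKnhds : K ∈ nhds (1 : G)) (hKgen : ∀ g : G, ∃ n : ℕ, g ∈ K ^ n)
    {C : Set G} (hC : IsCompact C) : ∃ n : ℕ, C ⊆ K ^ n := by
  have h1K : (1 : G) ∈ K := mem_of_mem_nhds hKnhds
  have hint : (1 : G) ∈ interior K := mem_interior_iff_mem_nhds.mpr hKnhds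
  have hsub : ∀ n : ℕ, K ^ n ⊆ interior (K ^ (n+1)) := by
    intro n g hg
    have hopen : IsOpen (g • interior K) := isOpen_interior.smul g
    have hmem : g ∈ g • interior K := ⟨1, hint, mul_one g⟩
    have hsub2 : g • interior K ⊆ K ^ (n+1) := by
      rintro y ⟨v, hv, rfl⟩
      rw [pow_succ]
      exact Set.mul_mem_mul hg (interior_subset hv)
    exact interior_maximal hsub2 hopen hmem
  have hcov : C ⊆ ⋃ n : ℕ, interior (K ^ (n+1)) := by
    intro g _
    obtain ⟨n, hn⟩ := hKgen g
    exact Set.mem_iUnion.mpr ⟨n, hsub n hn⟩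
  obtain ⟨t, ht⟩ := hC.elim_finite_subcover (fun n : ℕ => interior (K ^ (n+1)))
    (fun n => isOpen_interior) hcov
  rcases t.eq_empty_or_nonempty with rfl | hne
  · refine ⟨0, ?_⟩
    intro g hg
    simpa using ht hg
  · refine ⟨t.max' hne + 1, ?_⟩
    intro g hg
    obtain ⟨n, hn, hgn⟩ := Set.mem_iUnion₂.mp (ht hg)
    exact Set.pow_subset_pow_right h1K
      (Nat.succ_le_succ (t.le_max' n hn)) (interior_subset hgn)

/-- The closure of a symmetric compact neighbourhood of the identity is contained in
its square. -/
lemma aux_closure_sub {G : Type*} [Group G] [TopologicalSpace G] [IsTopologicalGroup G]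
    {K : Set G} (hKnhds : K ∈ nhds (1 : G)) (hKsymm : K⁻¹ = K) :
    closure K ⊆ K * K := by
  intro x hx
  have hint : (1 : G) ∈ interior K := mem_interior_iff_mem_nhds.mpr hKnhds
  have hopen : IsOpen (x • interior K) := isOpen_interior.smul x
  have hmem : x ∈ x • interior K := ⟨1, hint, mul_one x⟩
  obtain ⟨k, hk1, hk2⟩ := (mem_closure_iff.mp hx) _ hopen hmem
  obtain ⟨v, hv, rfl⟩ := hk1
  have hvK : v⁻¹ ∈ K := by rw [← hKsymm]; simpa using interior_subset hv
  have : x = (x * v) * v⁻¹ := by group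
  rw [this]
  exact Set.mul_mem_mul hk2 hvK

open scoped Classical in
/-- Sets with multiplicity at most `N` inside `D` have total measure at most `N * μ D`. -/
lemma aux_mult {G : Type*} [MeasurableSpace G] (μ : Measure G) {ι : Type*} (s : Finset ι)
    (T : ι → Set G) (hT : ∀ i ∈ s, MeasurableSet (T i)) (D : Set G)
    (hTD : ∀ i ∈ s, T i ⊆ D) (N : ℕ)
    (hmult : ∀ g : G, (s.filter (fun i => g ∈ T i)).card ≤ N) :
    ∑ i ∈ s, μ (T i) ≤ N * μ D := by
  have h1 : ∀ i ∈ s, μ (T i) = ∫⁻ g, (T i).indicator (fun _ => (1:ENNReal)) g ∂μ := by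
    intro i hi
    exact (lintegral_indicator_one (hT i hi)).symm
  rw [Finset.sum_congr rfl h1, ← lintegral_finset_sum]
  · have hpt : ∀ g : G, ∑ i ∈ s, (T i).indicator (fun _ => (1:ENNReal)) g
        ≤ D.indicator (fun _ => (N:ENNReal)) g := by
      intro g
      have hsum : ∑ i ∈ s, (T i).indicator (fun _ => (1:ENNReal)) g
          = ((s.filter (fun i => g ∈ T i)).card : ENNReal) := by
        rw [Finset.card_filter]
        push_cast
        rw [Finset.sum_congr rfl]
        intro i _
        by_cases h : g ∈ T i <;> simp [Set.indicator, h]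
      rw [hsum]
      rcases (s.filter (fun i => g ∈ T i)).eq_empty_or_nonempty with he | ⟨i, hi⟩
      · rw [he]; simp
      · have hiT : g ∈ T i ∧ i ∈ s := by
          have := Finset.mem_filter.mp hi; exact ⟨this.2, this.1⟩
        have hgD : g ∈ D := hTD i hiT.2 (hiT.1)
        rw [Set.indicator_of_mem hgD]
        exact_mod_cast Nat.cast_le.mpr (hmult g)
    calc ∫⁻ g, ∑ i ∈ s, (T i).indicator (fun _ => (1:ENNReal)) g ∂μ
        ≤ ∫⁻ g, D.indicator (fun _ => (N:ENNReal)) g ∂μ := lintegral_mono hpt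
      _ ≤ N * μ D := lintegral_indicator_const_le _ _
  · intro i hi
    exact measurable_const.indicator (hT i hi)

/-- Left translation invariance for arbitrary sets. -/
lemma aux_translate {G : Type*} [Group G] [TopologicalSpace G] [MeasurableSpace G]
    [BorelSpace G] [IsTopologicalGroup G] (μ : Measure G) [μ.IsMulLeftInvariant]
    (g : G) (S : Set G) : μ (g • S) = μ S := by
  have h := measure_preimage_mul μ g (g • S)
  have hpre : (fun h => g * h) ⁻¹' (g • S) = S := by
    ext t
    simp only [Set.mem_preimage]
    constructor
    · rintro ⟨u, hu, hut⟩
      have : u = t := by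
        have : g * u = g * t := hut
        exact mul_left_cancel this
      rwa [← this]
    · intro ht
      exact ⟨t, ht, rfl⟩
  rw [hpre] at h
  exact h.symm

end Aux

open MeasureTheory in
/-- if a unimodular compactly generated group satisfies the Følner
condition, then its rough Cayley graph is amenable as a metric space. -/
theorem folner_implies_rough_cayley_graph_amenable
    {G V : Type*} [Group G] [TopologicalSpace G] [IsTopologicalGroup G] [LocallyCompactSpace G]
    [MeasurableSpace G] [BorelSpace G]
    (μ : MeasureTheory.Measure G) [μ.IsHaarMeasure] [μ.IsMulRightInvariant]
    (K : Set G) (hKcomp : IsCompact K) (hKnhds : K ∈ nhds (1 : G)) (hKsymm : K⁻¹ = K)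
    (hKgen : ∀ g : G, ∃ n : ℕ, g ∈ K ^ n)
    (Gr : SimpleGraph V) (act : G → V → V) (C₁ r₁ : ℝ) (hC₁ : 1 ≤ C₁) (hr₁ : 0 ≤ r₁)
    (hrcg : IsRoughCayleyGraph Gr act C₁ r₁)
    (hFolner : ∀ ε : ℝ, 0 < ε → ∀ m : ℕ, ∃ L : Set G,
      IsCompact L ∧ 0 < μ L ∧ μ ((L * K ^ m) \ L) < ENNReal.ofReal ε * μ L) :
    ∀ c ε : ℝ, 0 < c → 0 < ε → ∃ A : Set V, A.Finite ∧ A.Nonempty ∧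
      ((grBoundary Gr c A).ncard : ℝ) < ε * (A.ncard : ℝ) := by
  classical
  obtain ⟨hconn, ⟨M, hM⟩, hQIsurj, hid, hmul, hbdd, hprop, hcob⟩ := hrcg
  intro c ε hc hε
  obtain ⟨x₀⟩ := hconn.nonempty
  set gd : V → V → ℝ := grDist Gr with hgd
  have gd_nonneg : ∀ x y, 0 ≤ gd x y := fun x y => Nat.cast_nonneg _
  have gd_refl : ∀ x, gd x x = 0 := by
    intro x; simp [hgd, grDist, SimpleGraph.dist_self]
  have gd_symm : ∀ x y, gd x y = gd y x := by
    intro x y; simp [hgd, grDist, SimpleGraph.dist_comm]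
  have gd_tri : ∀ x y z, gd x z ≤ gd x y + gd y z := by
    intro x y z
    have := hconn.dist_triangle (u := x) (v := y) (w := z)
    simp only [hgd, grDist]
    exact_mod_cast this
  have hC₁0 : (0:ℝ) ≤ C₁ := le_trans zero_le_one hC₁
  have qi_upper : ∀ (s : G) (x y : V), gd (act s x) (act s y) ≤ C₁ * gd x y + r₁ :=
    fun s x y => ((hQIsurj s).1 x y).2
  set φ : G → V := fun s => act s x₀ with hφ
  choose ψ hψ using fun v => hcob x₀ v
  -- basic facts about K
  have h1K : (1:G) ∈ K := mem_of_mem_nhds hKnhds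
  obtain ⟨R_K', hR_K'⟩ := hbdd K hKcomp x₀
  set R_K := max R_K' 0 with hRKdef
  have hR_K : ∀ k ∈ K, gd (act k x₀) x₀ ≤ R_K := fun k hk => le_trans (hR_K' k hk) (le_max_left _ _)
  have hRK0 : 0 ≤ R_K := le_max_right _ _
  set a₀ : ℝ := C₁ * R_K + 2*r₁ with ha₀def
  have ha₀ : 0 ≤ a₀ := by positivity
  -- displacement bound
  have disp : ∀ n : ℕ, ∀ u ∈ K^n, gd (act u x₀) x₀ ≤ r₁ + n * a₀ := by
    intro n
    induction n with
    | zero =>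
      intro u hu
      rw [pow_zero, Set.mem_one] at hu
      subst hu
      simpa using hid x₀
    | succ n ih =>
      intro u hu
      rw [pow_succ] at hu
      obtain ⟨w, hw, k, hk, rfl⟩ := hu
      have t1 : gd (act (w*k) x₀) (act w (act k x₀)) ≤ r₁ := by
        rw [gd_symm]; exact hmul w k x₀
      have t2 : gd (act w (act k x₀)) (act w x₀) ≤ C₁ * gd (act k x₀) x₀ + r₁ := qi_upper w _ _
      have t3 : gd (act w x₀) x₀ ≤ r₁ + n * a₀ := ih w hw
      have t4 : gd (act k x₀) x₀ ≤ R_K := hR_K k hk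
      have tri1 := gd_tri (act (w*k) x₀) (act w (act k x₀)) x₀
      have tri2 := gd_tri (act w (act k x₀)) (act w x₀) x₀
      have : gd (act (w*k) x₀) x₀ ≤ r₁ + (C₁ * R_K + r₁) + (r₁ + n * a₀) := by
        nlinarith
      push_cast
      rw [ha₀def]
      nlinarith
  -- upper bound on displacement of products
  set E : ℕ → ℝ := fun n => C₁ * (r₁ + n * a₀) + 2*r₁ with hEdef
  have hE0 : ∀ n, 0 ≤ E n := by
    intro n; rw [hEdef]; positivity
  have Eub : ∀ (n : ℕ) (l u : G), u ∈ K^n → gd (φ (l * u)) (φ l) ≤ E n := by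
    intro n l u hu
    have t1 : gd (act (l*u) x₀) (act l (act u x₀)) ≤ r₁ := by
      rw [gd_symm]; exact hmul l u x₀
    have t2 : gd (act l (act u x₀)) (act l x₀) ≤ C₁ * gd (act u x₀) x₀ + r₁ := qi_upper l _ _
    have t3 := disp n u hu
    have tri1 := gd_tri (act (l*u) x₀) (act l (act u x₀)) (act l x₀)
    rw [hEdef]
    simp only [hφ]
    nlinarith
  -- key lemma for properness
  have key1 : ∀ s t : G, gd (act (s⁻¹ * t) x₀) x₀ ≤ C₁ * gd (φ s) (φ t) + 4*r₁ := by
    intro s t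
    have t1 : gd (act (s⁻¹*t) x₀) (act s⁻¹ (act t x₀)) ≤ r₁ := by
      rw [gd_symm]; exact hmul s⁻¹ t x₀
    have t2 : gd (act s⁻¹ (act t x₀)) (act s⁻¹ (act s x₀)) ≤ C₁ * gd (act t x₀) (act s x₀) + r₁ :=
      qi_upper s⁻¹ _ _
    have t3 : gd (act s⁻¹ (act s x₀)) (act (s⁻¹ * s) x₀) ≤ r₁ := hmul s⁻¹ s x₀
    have t4 : gd (act (s⁻¹ * s) x₀) x₀ ≤ r₁ := by
      rw [inv_mul_cancel]; exact hid x₀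
    have tri1 := gd_tri (act (s⁻¹*t) x₀) (act s⁻¹ (act t x₀)) x₀
    have tri2 := gd_tri (act s⁻¹ (act t x₀)) (act s⁻¹ (act s x₀)) x₀
    have tri3 := gd_tri (act s⁻¹ (act s x₀)) (act (s⁻¹ * s) x₀) x₀
    have hsy : gd (act t x₀) (act s x₀) = gd (φ s) (φ t) := by
      rw [gd_symm]
    nlinarith
  -- word-metric properness
  have wordprop : ∀ R : ℝ, ∃ n : ℕ, ∀ s t : G, gd (φ s) (φ t) ≤ R → s⁻¹ * t ∈ K ^ n := by
    intro R
    obtain ⟨n, hn⟩ := aux_cpt_pow hKnhds hKgen (hprop (C₁ * R + 4*r₁) x₀)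
    refine ⟨n, fun s t h => ?_⟩
    apply hn
    apply subset_closure
    show gd (act (s⁻¹ * t) x₀) x₀ ≤ C₁ * R + 4*r₁
    have := key1 s t
    nlinarith
  -- fiber bound
  set S₀ : Set G := {w : G | gd (act w x₀) x₀ ≤ C₁ * (2*r₁) + 4*r₁} with hS₀def
  set κ : ENNReal := μ (closure S₀) with hκdef
  have hκfin : κ ≠ ⊤ := (hprop (C₁ * (2*r₁) + 4*r₁) x₀).measure_lt_top.ne
  have fiber : ∀ (v : V) (s₀ s : G), gd (φ s₀) v ≤ r₁ → gd (φ s) v ≤ r₁ →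
      s ∈ s₀ • closure S₀ := by
    intro v s₀ s h₀ h₁
    have hd : gd (φ s₀) (φ s) ≤ 2*r₁ := by
      have t1 := gd_tri (φ s₀) v (φ s)
      have t2 := gd_symm (φ s) v
      linarith
    have hmem : s₀⁻¹ * s ∈ S₀ := by
      show gd (act (s₀⁻¹ * s) x₀) x₀ ≤ C₁ * (2*r₁) + 4*r₁
      have := key1 s₀ s
      nlinarith
    refine ⟨s₀⁻¹ * s, subset_closure hmem, ?_⟩
    simp [smul_eq_mul]
  -- the measure cover bound for compact sets
  have cover : ∀ L : Set G, IsCompact L → (φ '' L).Finite ∧ μ L ≤ ((φ '' L).ncard : ENNReal) * κ := by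
    intro L hL
    obtain ⟨R_L, hR_L⟩ := hbdd L hL x₀
    have hΦsub : φ '' L ⊆ {v : V | Gr.dist x₀ v ≤ ⌊max R_L 0⌋₊} := by
      rintro v ⟨l, hl, rfl⟩
      have h1 : gd (φ l) x₀ ≤ max R_L 0 := le_trans (hR_L l hl) (le_max_left _ _)
      have h2 : (Gr.dist x₀ (φ l) : ℝ) ≤ max R_L 0 := by
        rw [SimpleGraph.dist_comm]
        exact h1
      exact Nat.le_floor h2
    have hΦfin : (φ '' L).Finite :=
      Set.Finite.subset (aux_ball hconn hM x₀ ⌊max R_L 0⌋₊).1 hΦsub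
    refine ⟨hΦfin, ?_⟩
    set Φ := hΦfin.toFinset with hΦ
    have hcov : L ⊆ ⋃ v ∈ Φ, {s : G | gd (φ s) v ≤ r₁} := by
      intro s hs
      apply Set.mem_biUnion (show φ s ∈ Φ by rw [hΦ, Set.Finite.mem_toFinset]; exact ⟨s, hs, rfl⟩)
      show gd (φ s) (φ s) ≤ r₁
      rw [gd_refl]; exact hr₁
    have hFv : ∀ v ∈ Φ, μ {s : G | gd (φ s) v ≤ r₁} ≤ κ := by
      intro v hv
      rw [hΦ, Set.Finite.mem_toFinset] at hv
      obtain ⟨l, _, rfl⟩ := hv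
      have hsub : {s : G | gd (φ s) (φ l) ≤ r₁} ⊆ l • closure S₀ := by
        intro s hs
        apply fiber (φ l) l s
        · rw [gd_refl]; exact hr₁
        · exact hs
      calc μ {s : G | gd (φ s) (φ l) ≤ r₁} ≤ μ (l • closure S₀) := measure_mono hsub
        _ = κ := by rw [aux_translate]
    calc μ L ≤ μ (⋃ v ∈ Φ, {s : G | gd (φ s) v ≤ r₁}) := measure_mono hcov
      _ ≤ ∑ v ∈ Φ, μ {s : G | gd (φ s) v ≤ r₁} := measure_biUnion_finset_le _ _
      _ ≤ ∑ _v ∈ Φ, κ := Finset.sum_le_sum hFv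
      _ = (Φ.card : ENNReal) * κ := by rw [Finset.sum_const, nsmul_eq_mul]
      _ = ((φ '' L).ncard : ENNReal) * κ := by
          rw [hΦ, ← Set.ncard_eq_toFinset_card _ hΦfin]
  -- the closure of K
  have hclK : closure K ⊆ K * K := aux_closure_sub hKnhds hKsymm
  have hclKK : closure K ⊆ K ^ 2 := by rwa [pow_two]
  have hKinv : ∀ k ∈ K, k⁻¹ ∈ K := by
    intro k hk
    rw [← hKsymm]
    simpa using hk
  have hclKinv : ∀ h ∈ closure K, h⁻¹ ∈ K ^ 2 := by
    intro h hh
    obtain ⟨k₁, hk₁, k₂, hk₂, rfl⟩ := hclK hh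
    rw [pow_two, mul_inv_rev]
    exact Set.mul_mem_mul (hKinv _ hk₂) (hKinv _ hk₁)
  set κK : ENNReal := μ (closure K) with hκKdef
  have hKKcomp : IsCompact (K * K) := hKcomp.mul hKcomp
  have hclKcomp : IsCompact (closure K) := hKKcomp.of_isClosed_subset isClosed_closure hclK
  have hκKfin : κK ≠ ⊤ := hclKcomp.measure_lt_top.ne
  have hκKpos : 0 < κK := by
    have h1 : (0:ENNReal) < μ (interior K) := by
      apply (isOpen_interior.measure_pos μ)
      exact ⟨1, mem_interior_iff_mem_nhds.mpr hKnhds⟩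
    exact lt_of_lt_of_le h1 (measure_mono (le_trans interior_subset subset_closure))
  -- multiplicity constant
  set ρ₂ : ℝ := E 4 + 2*r₁ with hρ₂def
  have hρ₂0 : 0 ≤ ρ₂ := by rw [hρ₂def]; have := hE0 4; linarith
  set n₂ : ℕ := ⌊ρ₂⌋₊ with hn₂def
  set N : ℕ := (M+1)^n₂ with hNdef
  -- choose ε'
  set ε' : ℝ := ε * κK.toReal / (2 * (N+1) * (κ.toReal + 1)) with hε'def
  have hκKtR : 0 < κK.toReal := ENNReal.toReal_pos hκKpos.ne' hκKfin
  have hκtR : 0 ≤ κ.toReal := ENNReal.toReal_nonneg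
  have hε'pos : 0 < ε' := by
    rw [hε'def]
    positivity
  -- the radius and the power m
  set ρ : ℝ := c + r₁ + E 2 + 1 with hρdef
  have hρ0 : 0 < ρ := by
    have := hE0 2
    rw [hρdef]; linarith
  obtain ⟨n₁, hn₁⟩ := wordprop (ρ + c + r₁)
  set m : ℕ := n₁ + 2 with hmdef
  obtain ⟨L, hLcomp, hLpos, hLfol⟩ := hFolner ε' hε'pos m
  have hLfin : μ L ≠ ⊤ := hLcomp.measure_lt_top.ne
  have hLne : L.Nonempty := by
    rw [Set.nonempty_iff_ne_empty]
    rintro rfl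
    simp at hLpos
  -- the Følner set in the graph
  set A : Set V := {v : V | ∃ l ∈ L, gd v (φ l) ≤ ρ} with hAdef
  obtain ⟨R_L, hR_L⟩ := hbdd L hLcomp x₀
  have hRL0 : 0 ≤ R_L := by
    obtain ⟨l, hl⟩ := hLne
    exact le_trans (gd_nonneg (act l x₀) x₀) (hR_L l hl)
  have hAsub : A ⊆ {v : V | Gr.dist x₀ v ≤ ⌊ρ + R_L⌋₊} := by
    rintro v ⟨l, hl, hvl⟩
    have h1 : gd v x₀ ≤ ρ + R_L := by
      linarith [gd_tri v (φ l) x₀, hR_L l hl, hvl]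
    have h2 : (Gr.dist x₀ v : ℝ) ≤ ρ + R_L := by
      rw [SimpleGraph.dist_comm]
      exact h1
    exact Nat.le_floor h2
  have hAfin : A.Finite := Set.Finite.subset (aux_ball hconn hM x₀ ⌊ρ + R_L⌋₊).1 hAsub
  have hAne : A.Nonempty := by
    obtain ⟨l, hl⟩ := hLne
    exact ⟨φ l, l, hl, by rw [gd_refl]; linarith⟩
  -- μ L is controlled by the size of A
  obtain ⟨hΦLfin, hμcov⟩ := cover L hLcomp
  have hΦA : φ '' L ⊆ A := by
    rintro v ⟨l, hl, rfl⟩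
    exact ⟨l, hl, by rw [gd_refl]; linarith⟩
  have hμLA : μ L ≤ (A.ncard : ENNReal) * κ := by
    refine le_trans hμcov ?_
    apply mul_le_mul_left
    exact_mod_cast Nat.cast_le.mpr (Set.ncard_le_ncard hΦA hAfin)
  -- the boundary
  set Bd : Set V := grBoundary Gr c A with hBddef
  have hBdsub : Bd ⊆ {v : V | Gr.dist x₀ v ≤ ⌊c + ρ + R_L⌋₊} := by
    rintro x ⟨⟨a, haA, hxa⟩, _⟩
    obtain ⟨l, hl, hal⟩ := haA
    have h1 : gd x x₀ ≤ c + ρ + R_L := by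
      linarith [gd_tri x a x₀, gd_tri a (φ l) x₀, hR_L l hl, hxa, hal]
    have h2 : (Gr.dist x₀ x : ℝ) ≤ c + ρ + R_L := by
      rw [SimpleGraph.dist_comm]; exact h1
    exact Nat.le_floor h2
  have hBdfin : Bd.Finite := Set.Finite.subset (aux_ball hconn hM x₀ ⌊c + ρ + R_L⌋₊).1 hBdsub
  set sd : Finset V := hBdfin.toFinset with hsddef
  set T : V → Set G := fun x => ψ x • closure K with hTdef
  set D : Set G := (L * K ^ m) \ L with hDdef
  -- each T x lies inside LK^m and avoids L, for x in the boundary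
  have hannulus : ∀ x ∈ Bd, (ψ x ∈ L * K ^ n₁) ∧ (∀ l ∈ L, ρ - c - r₁ ≤ gd (φ (ψ x)) (φ l)) := by
    rintro x ⟨⟨a, haA, hxa⟩, ⟨b, hbA, hxb⟩⟩
    obtain ⟨l₀, hl₀, hal₀⟩ := haA
    constructor
    · -- upper bound
      have h1 : gd (φ l₀) (φ (ψ x)) ≤ ρ + c + r₁ := by
        have h2 : gd (φ (ψ x)) x ≤ r₁ := hψ x
        have t1 := gd_tri (φ l₀) x (φ (ψ x))
        have t2 := gd_tri (φ l₀) a x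
        have t3 := gd_symm a (φ l₀)
        have t4 := gd_symm x a
        have t5 := gd_symm (φ (ψ x)) x
        linarith
      have h3 := hn₁ l₀ (ψ x) h1
      have : ψ x = l₀ * (l₀⁻¹ * ψ x) := by group
      rw [this]
      exact Set.mul_mem_mul hl₀ h3
    · -- lower bound
      intro l hl
      have hb : ¬ (gd b (φ l) ≤ ρ) := by
        intro h
        exact hbA ⟨l, hl, h⟩
      push_neg at hb
      have h2 : gd (φ (ψ x)) x ≤ r₁ := hψ x
      have t1 := gd_tri b x (φ (ψ x))
      have t2 := gd_tri b (φ (ψ x)) (φ l)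
      have t3 := gd_symm x b
      have t4 := gd_symm (φ (ψ x)) x
      linarith
  have hTsub : ∀ x ∈ Bd, T x ⊆ D := by
    intro x hx
    obtain ⟨hup, hlow⟩ := hannulus x hx
    rintro y ⟨h, hh, rfl⟩
    constructor
    · -- in L * K^m
      have h1 : (h : G) ∈ K ^ 2 := hclKK hh
      have : ψ x • h ∈ (L * K ^ n₁) * K ^ 2 := Set.mul_mem_mul hup h1
      rwa [mul_assoc, ← pow_add] at this
    · -- not in L
      intro hyL
      have h2 : ψ x = (ψ x • h) * h⁻¹ := by simp [smul_eq_mul]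
      have h3 : h⁻¹ ∈ K ^ 2 := hclKinv h hh
      have h4 : gd (φ ((ψ x • h) * h⁻¹)) (φ (ψ x • h)) ≤ E 2 := Eub 2 (ψ x • h) h⁻¹ h3
      rw [← h2] at h4
      have h5 := hlow (ψ x • h) hyL
      rw [hρdef] at h5
      linarith
  have hTmeas : ∀ x ∈ sd, MeasurableSet (T x) := by
    intro x _
    have : IsClosed (T x) := by
      rw [hTdef]
      exact isClosed_closure.smul (ψ x)
    exact this.measurableSet
  have hTD : ∀ x ∈ sd, T x ⊆ D := by
    intro x hx
    exact hTsub x ((Set.Finite.mem_toFinset hBdfin).mp hx)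
  have hmult : ∀ g : G, (sd.filter (fun x => g ∈ T x)).card ≤ N := by
    intro g
    rcases (sd.filter (fun x => g ∈ T x)).eq_empty_or_nonempty with he | ⟨x, hx⟩
    · rw [he]; simp
    · obtain ⟨hxs, hgx⟩ := Finset.mem_filter.mp hx
      have hsubball : (sd.filter (fun y => g ∈ T y)) ⊆
          (aux_ball hconn hM x n₂).1.toFinset := by
        intro y hy
        obtain ⟨hys, hgy⟩ := Finset.mem_filter.mp hy
        rw [Set.Finite.mem_toFinset]
        show Gr.dist x y ≤ n₂
        -- g ∈ ψ x • closure K and g ∈ ψ y • closure K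
        obtain ⟨h₁, hh₁, hg₁⟩ := hgx
        obtain ⟨h₂, hh₂, hg₂⟩ := hgy
        have hrel : ψ y = ψ x * (h₁ * h₂⁻¹) := by
          have hxy : ψ x * h₁ = ψ y * h₂ := by
            have := hg₁.trans hg₂.symm
            simpa [smul_eq_mul] using this
          calc ψ y = (ψ y * h₂) * h₂⁻¹ := by group
            _ = (ψ x * h₁) * h₂⁻¹ := by rw [← hxy]
            _ = ψ x * (h₁ * h₂⁻¹) := by group
        have hu : h₁ * h₂⁻¹ ∈ K ^ 4 := by
          have ha : h₁ ∈ K ^ 2 := hclKK hh₁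
          have hb : h₂⁻¹ ∈ K ^ 2 := hclKinv h₂ hh₂
          have := Set.mul_mem_mul ha hb
          rwa [← pow_add] at this
        have h4 : gd (φ (ψ x * (h₁ * h₂⁻¹))) (φ (ψ x)) ≤ E 4 := Eub 4 (ψ x) _ hu
        rw [← hrel] at h4
        have h5 : gd x y ≤ ρ₂ := by
          have t1 := gd_tri x (φ (ψ x)) y
          have t2 := gd_tri (φ (ψ x)) (φ (ψ y)) y
          have t3 := gd_symm (φ (ψ x)) x
          have t4 : gd (φ (ψ x)) x ≤ r₁ := hψ x
          have t5 : gd (φ (ψ y)) y ≤ r₁ := hψ y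
          have t6 := gd_symm (φ (ψ y)) (φ (ψ x))
          rw [hρ₂def]
          linarith
        have h6 : (Gr.dist x y : ℝ) ≤ ρ₂ := h5
        exact Nat.le_floor h6
      calc (sd.filter (fun y => g ∈ T y)).card ≤ _ := Finset.card_le_card hsubball
        _ = {y : V | Gr.dist x y ≤ n₂}.ncard :=
            (Set.ncard_eq_toFinset_card _ (aux_ball hconn hM x n₂).1).symm
        _ ≤ N := (aux_ball hconn hM x n₂).2
  -- total measure bound
  have hμT : ∀ x ∈ sd, μ (T x) = κK := by
    intro x _
    rw [hTdef]
    exact aux_translate μ (ψ x) (closure K)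
  have hsum : (sd.card : ENNReal) * κK ≤ (N : ENNReal) * μ D := by
    have h1 := aux_mult μ sd T hTmeas D hTD N hmult
    have h2 : ∑ x ∈ sd, μ (T x) = (sd.card : ENNReal) * κK := by
      rw [Finset.sum_congr rfl hμT, Finset.sum_const, nsmul_eq_mul]
    rwa [h2] at h1
  -- convert to real numbers
  have hDsub : D ⊆ L * K ^ m := Set.diff_subset
  have hKmcomp : IsCompact (K ^ m) := by
    clear hsum hμT hmult hTD hTmeas hTsub hannulus
    induction m with
    | zero => rw [pow_zero, ← Set.singleton_one]; exact isCompact_singleton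
    | succ j ih => rw [pow_succ]; exact ih.mul hKcomp
  have hDfin : μ D ≠ ⊤ :=
    ((measure_mono hDsub).trans_lt (hLcomp.mul hKmcomp).measure_lt_top).ne
  set cb : ℝ := (sd.card : ℝ) with hcbdef
  set cA : ℝ := (A.ncard : ℝ) with hcAdef
  set kK : ℝ := κK.toReal with hkKdef
  set kap : ℝ := κ.toReal with hkapdef
  set mD : ℝ := (μ D).toReal with hmDdef
  set mL : ℝ := (μ L).toReal with hmLdef
  have h1 : cb * kK ≤ N * mD := by
    have := ENNReal.toReal_mono (by
      exact ENNReal.mul_ne_top (ENNReal.natCast_ne_top N) hDfin) hsum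
    rwa [ENNReal.toReal_mul, ENNReal.toReal_mul, ENNReal.toReal_natCast,
      ENNReal.toReal_natCast] at this
  have h2 : mD < ε' * mL := by
    have hfin : ENNReal.ofReal ε' * μ L ≠ ⊤ := ENNReal.mul_ne_top ENNReal.ofReal_ne_top hLfin
    have := ENNReal.toReal_strict_mono hfin hLfol
    rwa [ENNReal.toReal_mul, ENNReal.toReal_ofReal hε'pos.le] at this
  have h3 : mL ≤ cA * kap := by
    have hfin : (A.ncard : ENNReal) * κ ≠ ⊤ :=
      ENNReal.mul_ne_top (ENNReal.natCast_ne_top _) hκfin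
    have := ENNReal.toReal_mono hfin hμLA
    rwa [ENNReal.toReal_mul, ENNReal.toReal_natCast] at this
  have hcA1 : 1 ≤ cA := by
    rw [hcAdef]
    exact_mod_cast Nat.one_le_cast.mpr ((Set.ncard_pos hAfin).mpr hAne)
  have hmD0 : 0 ≤ mD := ENNReal.toReal_nonneg
  have hN0 : (0:ℝ) ≤ N := Nat.cast_nonneg _
  -- the final computation
  have hchain : cb * kK ≤ (N * ε' * kap) * cA := by
    calc cb * kK ≤ N * mD := h1
      _ ≤ N * (ε' * mL) := mul_le_mul_of_nonneg_left h2.le hN0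
      _ ≤ N * (ε' * (cA * kap)) :=
          mul_le_mul_of_nonneg_left (mul_le_mul_of_nonneg_left h3 hε'pos.le) hN0
      _ = (N * ε' * kap) * cA := by ring
  have hden : (0:ℝ) < 2 * ((N:ℝ)+1) * (kap+1) := by positivity
  have hkey : ε' * (2 * ((N:ℝ)+1) * (kap+1)) = ε * kK := by
    rw [hε'def]
    field_simp
  have hsmall : N * ε' * kap ≤ ε * kK / 2 := by
    rw [le_div_iff₀ (by norm_num : (0:ℝ) < 2)]
    calc (N:ℝ) * ε' * kap * 2 ≤ ε' * (2 * ((N:ℝ)+1) * (kap+1)) := by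
          nlinarith [mul_nonneg hε'pos.le hN0, mul_nonneg hε'pos.le hκtR,
            mul_nonneg (mul_nonneg hε'pos.le hN0) hκtR, hε'pos.le]
      _ = ε * kK := hkey
  have hcA0 : (0:ℝ) < cA := lt_of_lt_of_le one_pos hcA1
  have hfinal : cb * kK < (ε * cA) * kK := by
    have h6 : (N * ε' * kap) * cA ≤ (ε * kK / 2) * cA :=
      mul_le_mul_of_nonneg_right hsmall hcA0.le
    have h8 : (ε * cA) * kK - (ε * kK / 2) * cA = (ε * cA * kK) / 2 := by ring
    have h9 : (0:ℝ) < (ε * cA * kK) / 2 := by positivity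
    linarith
  have hcb : cb < ε * cA := lt_of_mul_lt_mul_right hfinal hκKtR.le
  refine ⟨A, hAfin, hAne, ?_⟩
  have : (grBoundary Gr c A).ncard = sd.card := Set.ncard_eq_toFinset_card _ hBdfin
  rw [this]
  exact hcb
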